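/- Let 0 < a < b. Then 1 ≤ A(a,b)/I(a,b) ≤ exp{ ((b−a)/(4·A(a,b)))·max(|ln(a/e)|, |ln(b/e)|) }. -/

import Mathlib

lemma hd_left (x : ℝ) (h : (0:ℝ) < 1 + x) :
    HasDerivAt (fun k : ℝ => (1+k) * Real.log (1+k)) (Real.log (1+x) + 1) x := by
  have d : HasDerivAt (fun k : ℝ => 1 + k) 1 x := (hasDerivAt_id x).const_add 1
  have := d.mul (d.log h.ne')
  refine this.congr_deriv (Eq.symm ?_)
  field_simp

lemma hd_right (x : ℝ) (h : (0:ℝ) < 1 - x) :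
    HasDerivAt (fun k : ℝ => (1-k) * Real.log (1-k)) (-Real.log (1-x) - 1) x := by
  have d : HasDerivAt (fun k : ℝ => 1 - k) (-1) x := (hasDerivAt_id x).const_sub 1
  have := d.mul (d.log h.ne')
  refine this.congr_deriv (Eq.symm ?_)
  field_simp
  ring

lemma hd_P (x : ℝ) (h1 : (0:ℝ) < 1 + x) (h2 : (0:ℝ) < 1 - x) :
    HasDerivAt (fun k : ℝ => (1+k) * Real.log (1+k) + (1-k) * Real.log (1-k))
      (Real.log (1+x) - Real.log (1-x)) x := by
  have := (hd_left x h1).add (hd_right x h2)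
  refine this.congr_deriv (Eq.symm ?_)
  ring

lemma hd_H (x : ℝ) (h1 : (0:ℝ) < 1 + x) (h2 : (0:ℝ) < 1 - x) :
    HasDerivAt (fun k : ℝ => (1+k) * Real.log (1+k) - (1-k) * Real.log (1-k) - 2*k)
      (Real.log (1+x) + Real.log (1-x)) x := by
  have d3 : HasDerivAt (fun k : ℝ => 2*k) 2 x := by
    simpa using (hasDerivAt_id x).const_mul 2
  have := ((hd_left x h1).sub (hd_right x h2)).sub d3
  refine this.congr_deriv (Eq.symm ?_)
  ring

lemma hd_G (x : ℝ) (h1 : (0:ℝ) < 1 + x) (h2 : (0:ℝ) < 1 - x) :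
    HasDerivAt (fun k : ℝ => k^2/2 * (Real.log (1+k) - Real.log (1-k))
        + ((1+k) * Real.log (1+k) - (1-k) * Real.log (1-k) - 2*k))
      (((1+x) * Real.log (1+x) + (1-x) * Real.log (1-x)) + x^2/2 * (1/(1+x) + 1/(1-x))) x := by
  have d1 : HasDerivAt (fun k : ℝ => 1 + k) 1 x := (hasDerivAt_id x).const_add 1
  have d2 : HasDerivAt (fun k : ℝ => 1 - k) (-1) x := (hasDerivAt_id x).const_sub 1
  have dsq : HasDerivAt (fun k : ℝ => k^2/2) x x := by
    simpa using (hasDerivAt_pow 2 x).div_const 2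
  have dlog : HasDerivAt (fun k : ℝ => Real.log (1+k) - Real.log (1-k))
      (1/(1+x) - (-1)/(1-x)) x := (d1.log h1.ne').sub (d2.log h2.ne')
  have := (dsq.mul dlog).add (hd_H x h1 h2)
  refine this.congr_deriv (Eq.symm ?_)
  field_simp
  ring

lemma P_nonneg {k : ℝ} (hk0 : 0 ≤ k) (hk1 : k < 1) :
    0 ≤ (1+k) * Real.log (1+k) + (1-k) * Real.log (1-k) := by
  set f : ℝ → ℝ := fun k => (1+k) * Real.log (1+k) + (1-k) * Real.log (1-k) with hf
  have key : ∀ x ∈ Set.Ico (0:ℝ) 1, HasDerivAt f (Real.log (1+x) - Real.log (1-x)) x :=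
    fun x hx => hd_P x (by linarith [hx.1]) (by linarith [hx.2])
  have mono : MonotoneOn f (Set.Ico 0 1) := by
    apply monotoneOn_of_deriv_nonneg (convex_Ico 0 1)
    · exact fun x hx => (key x hx).continuousAt.continuousWithinAt
    · rw [interior_Ico]
      exact fun x hx => (key x ⟨hx.1.le, hx.2⟩).differentiableAt.differentiableWithinAt
    · rw [interior_Ico]
      intro x hx
      rw [(key x ⟨hx.1.le, hx.2⟩).deriv]
      have : Real.log (1-x) ≤ Real.log (1+x) := by
        apply Real.log_le_log (by linarith [hx.2]) (by linarith [hx.1])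
      linarith
  have h0 : f 0 = 0 := by simp [hf]
  have := mono ⟨le_refl 0, one_pos⟩ ⟨hk0, hk1⟩ hk0
  rw [h0] at this
  exact this

lemma H_nonpos {k : ℝ} (hk0 : 0 ≤ k) (hk1 : k < 1) :
    (1+k) * Real.log (1+k) - (1-k) * Real.log (1-k) - 2*k ≤ 0 := by
  set f : ℝ → ℝ := fun k => (1+k) * Real.log (1+k) - (1-k) * Real.log (1-k) - 2*k with hf
  have key : ∀ x ∈ Set.Ico (0:ℝ) 1, HasDerivAt f (Real.log (1+x) + Real.log (1-x)) x :=
    fun x hx => hd_H x (by linarith [hx.1]) (by linarith [hx.2])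
  have anti : AntitoneOn f (Set.Ico 0 1) := by
    apply antitoneOn_of_deriv_nonpos (convex_Ico 0 1)
    · exact fun x hx => (key x hx).continuousAt.continuousWithinAt
    · rw [interior_Ico]
      exact fun x hx => (key x ⟨hx.1.le, hx.2⟩).differentiableAt.differentiableWithinAt
    · rw [interior_Ico]
      intro x hx
      rw [(key x ⟨hx.1.le, hx.2⟩).deriv]
      rw [← Real.log_mul (by nlinarith [hx.1, hx.2]) (by nlinarith [hx.2])]
      apply Real.log_nonpos (by nlinarith [hx.1, hx.2]) (by nlinarith [hx.1])
  have h0 : f 0 = 0 := by simp [hf]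
  have := anti ⟨le_refl 0, one_pos⟩ ⟨hk0, hk1⟩ hk0
  rw [h0] at this
  exact this

lemma G_nonneg {k : ℝ} (hk0 : 0 ≤ k) (hk1 : k < 1) :
    0 ≤ k^2/2 * (Real.log (1+k) - Real.log (1-k))
        + ((1+k) * Real.log (1+k) - (1-k) * Real.log (1-k) - 2*k) := by
  set f : ℝ → ℝ := fun k => k^2/2 * (Real.log (1+k) - Real.log (1-k))
      + ((1+k) * Real.log (1+k) - (1-k) * Real.log (1-k) - 2*k) with hf
  have key : ∀ x ∈ Set.Ico (0:ℝ) 1, HasDerivAt f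
      (((1+x) * Real.log (1+x) + (1-x) * Real.log (1-x)) + x^2/2 * (1/(1+x) + 1/(1-x))) x :=
    fun x hx => hd_G x (by linarith [hx.1]) (by linarith [hx.2])
  have mono : MonotoneOn f (Set.Ico 0 1) := by
    apply monotoneOn_of_deriv_nonneg (convex_Ico 0 1)
    · exact fun x hx => (key x hx).continuousAt.continuousWithinAt
    · rw [interior_Ico]
      exact fun x hx => (key x ⟨hx.1.le, hx.2⟩).differentiableAt.differentiableWithinAt
    · rw [interior_Ico]
      intro x hx
      rw [(key x ⟨hx.1.le, hx.2⟩).deriv]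
      have h1 := P_nonneg hx.1.le hx.2
      have h2 : (0:ℝ) ≤ x^2/2 * (1/(1+x) + 1/(1-x)) := by
        have : (0:ℝ) < 1 - x := by linarith [hx.2]
        have : (0:ℝ) < 1 + x := by linarith [hx.1]
        positivity
      linarith
  have h0 : f 0 = 0 := by simp [hf]
  have := mono ⟨le_refl 0, one_pos⟩ ⟨hk0, hk1⟩ hk0
  rw [h0] at this
  exact this

set_option maxHeartbeats 1000000 in
/-- Inequality (6.4): bounds for the ratio of the arithmetic and identric means. -/
theorem arith_identric_mean_inequality (a b : ℝ) (ha : 0 < a) (hab : a < b) :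
    1 ≤ ((a + b) / 2) / (1 / Real.exp 1 * (b ^ b / a ^ a) ^ (1 / (b - a))) ∧
      ((a + b) / 2) / (1 / Real.exp 1 * (b ^ b / a ^ a) ^ (1 / (b - a))) ≤
        Real.exp ((b - a) / (4 * ((a + b) / 2)) *
          max |Real.log (a / Real.exp 1)| |Real.log (b / Real.exp 1)|) := by
  have hb : 0 < b := ha.trans hab
  have hA : 0 < (a+b)/2 := by linarith
  have hba : 0 < b - a := by linarith
  have hI : 0 < 1 / Real.exp 1 * (b ^ b / a ^ a) ^ (1 / (b - a)) := by positivity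
  have hX : 0 < ((a + b) / 2) / (1 / Real.exp 1 * (b ^ b / a ^ a) ^ (1 / (b - a))) :=
    div_pos hA hI
  set u := Real.log a with hu
  set v := Real.log b with hv
  set w := Real.log ((a+b)/2) with hw
  set k : ℝ := (b-a)/(a+b) with hk
  have hk0 : 0 < k := div_pos hba (by linarith)
  have hk1 : k < 1 := (div_lt_one (by linarith)).2 (by linarith)
  have hl1 : Real.log (1+k) = v - w := by
    have h1k : 1 + k = b / ((a+b)/2) := by rw [hk]; field_simp; ring
    rw [h1k, Real.log_div hb.ne' hA.ne']
  have hl2 : Real.log (1-k) = u - w := by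
    have h2k : 1 - k = a / ((a+b)/2) := by rw [hk]; field_simp; ring
    rw [h2k, Real.log_div ha.ne' hA.ne']
  -- log of the identric mean
  have hlogI : Real.log (1 / Real.exp 1 * (b ^ b / a ^ a) ^ (1 / (b - a)))
      = -1 + (b * v - a * u) / (b - a) := by
    rw [Real.log_mul (by positivity) (by positivity),
      Real.log_div one_ne_zero (Real.exp_ne_zero 1), Real.log_exp, Real.log_one,
      Real.log_rpow (by positivity),
      Real.log_div (by positivity : (b:ℝ) ^ (b:ℝ) ≠ 0) (by positivity : (a:ℝ) ^ (a:ℝ) ≠ 0),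
      Real.log_rpow hb, Real.log_rpow ha]
    ring
  have hlogX : Real.log (((a + b) / 2) / (1 / Real.exp 1 * (b ^ b / a ^ a) ^ (1 / (b - a))))
      = w + 1 - (b * v - a * u) / (b - a) := by
    rw [Real.log_div hA.ne' hI.ne', hlogI]
    ring
  -- key inequalities from the one-variable lemmas
  have hH := H_nonpos hk0.le hk1
  have hG := G_nonneg hk0.le hk1
  rw [hl1, hl2] at hH hG
  have key1 : b*(v-w) - a*(u-w) - (b-a)
      = ((1+k)*(v-w) - (1-k)*(u-w) - 2*k) * ((a+b)/2) := by
    rw [hk]; field_simp; ring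
  have hH' : b*(v-w) - a*(u-w) - (b-a) ≤ 0 := by
    rw [key1]
    exact mul_nonpos_of_nonpos_of_nonneg hH hA.le
  have key2 : (b-a)^2/(4*(a+b))*(v-u) + (b*(v-w) - a*(u-w) - (b-a))
      = (k^2/2 * ((v-w) - (u-w)) + ((1+k)*(v-w) - (1-k)*(u-w) - 2*k)) * ((a+b)/2) := by
    rw [hk]; field_simp; ring
  have hG' : 0 ≤ (b-a)^2/(4*(a+b))*(v-u) + (b*(v-w) - a*(u-w) - (b-a)) := by
    rw [key2]
    exact mul_nonneg hG hA.le
  constructor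
  · -- lower bound
    have hlog1 : 0 ≤ Real.log (((a + b) / 2) / (1 / Real.exp 1 * (b ^ b / a ^ a) ^ (1 / (b - a)))) := by
      rw [hlogX, sub_nonneg, div_le_iff₀ hba]
      nlinarith [hH']
    have := Real.exp_le_exp.mpr hlog1
    rwa [Real.exp_zero, Real.exp_log hX] at this
  · -- upper bound
    set M := max |Real.log (a / Real.exp 1)| |Real.log (b / Real.exp 1)| with hM
    have hMvu : v - u ≤ 2 * M := by
      have ea : Real.log (a / Real.exp 1) = u - 1 := by
        rw [Real.log_div ha.ne' (Real.exp_ne_zero 1), Real.log_exp]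
      have eb : Real.log (b / Real.exp 1) = v - 1 := by
        rw [Real.log_div hb.ne' (Real.exp_ne_zero 1), Real.log_exp]
      have h1 : -(|u - 1|) ≤ u - 1 := neg_abs_le _
      have h2 : v - 1 ≤ |v - 1| := le_abs_self _
      have h3 : |u - 1| ≤ M := by rw [hM, ea]; exact le_max_left _ _
      have h4 : |v - 1| ≤ M := by rw [hM, eb]; exact le_max_right _ _
      linarith
    have hlog2 : Real.log (((a + b) / 2) / (1 / Real.exp 1 * (b ^ b / a ^ a) ^ (1 / (b - a))))
        ≤ (b - a) / (4 * ((a + b) / 2)) * M := by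
      rw [hlogX]
      have step1 : w + 1 - (b*v - a*u)/(b-a) ≤ (b-a)*(v-u)/(4*(a+b)) := by
        have heq : (b-a)*(v-u)/(4*(a+b)) - (w + 1 - (b*v - a*u)/(b-a))
            = ((b-a)^2/(4*(a+b))*(v-u) + (b*(v-w) - a*(u-w) - (b-a)))/(b-a) := by
          field_simp
          ring
        have hnn : 0 ≤ (b-a)*(v-u)/(4*(a+b)) - (w + 1 - (b*v - a*u)/(b-a)) := by
          rw [heq]; exact div_nonneg hG' hba.le
        linarith
      have step2 : (b-a)*(v-u)/(4*(a+b)) ≤ (b - a) / (4 * ((a + b) / 2)) * M := by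
        have heq : (b - a) / (4 * ((a + b) / 2)) * M - (b-a)*(v-u)/(4*(a+b))
            = (b-a)/(4*(a+b)) * (2*M - (v-u)) := by
          field_simp
        have hnn : 0 ≤ (b - a) / (4 * ((a + b) / 2)) * M - (b-a)*(v-u)/(4*(a+b)) := by
          rw [heq]
          apply mul_nonneg (by positivity)
          linarith
        linarith
      linarith
    have := Real.exp_le_exp.mpr hlog2
    rwa [Real.exp_log hX] at this
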